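/- Let a = 2k and b = a(n+1) - 2, where k ≥ 1 and n ≥ 1 are integers. Then the number of (a,b)-Dyck paths satisfies |D_{a,b}| = C⁻(a,n) − Σ_{j=1}^{k−1} C⁻(a−j,n)·C⁻(j,n), where C⁻(t,n) := (1/(t + t(n+1) − 1))·binom(t + t(n+1) − 1, t) is the number of Dyck paths in the t × (t(n+1)−1) rectangle (with the convention C⁻(1,n) = 1). -/

import Mathlib

/-- The number of `(a,b)`-Dyck paths: lattice paths from `(0,a)` to `(b,0)` with unit
south and east steps staying weakly below the segment joining these points, encoded as
weakly increasing sequences `c_1 ≤ … ≤ c_{a-1}` of naturals with `c_l ≤ ⌊b*l/a⌋`. -/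
noncomputable def dyckCount (a b : ℕ) : ℕ :=
  Nat.card {c : Fin (a - 1) → ℕ //
    Monotone c ∧ ∀ l : Fin (a - 1), c l ≤ b * (l.1 + 1) / a}

/-- `C⁻(t,n)`: the number of Dyck paths in the `t × (t(n+1)-1)` rectangle,
given by the rational expression `(1/(t + t(n+1) - 1)) * binom(t + t(n+1) - 1, t)`. -/
noncomputable def Cminus (t n : ℕ) : ℚ :=
  ((t + t * (n + 1) - 1).choose t : ℚ) / ((t + t * (n + 1) - 1 : ℕ) : ℚ)

open Finset

namespace DyckAux

variable {N : ℕ}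

/-- Number of lattice positions `i ∈ [0,y)` whose residue `r + i` lies in `S`. -/
noncomputable def cntw (S : Finset (ZMod N)) (r : ZMod N) (y : ℕ) : ℕ :=
  ((Finset.range y).filter (fun i : ℕ => r + (i : ZMod N) ∈ S)).card

lemma cntw_succ (S : Finset (ZMod N)) (r : ZMod N) (y : ℕ) :
    cntw S r (y + 1) = cntw S r y + if r + (y : ZMod N) ∈ S then 1 else 0 := by
  unfold cntw
  rw [Finset.range_add_one, Finset.filter_insert]
  split
  · rw [Finset.card_insert_of_notMem (fun h => Finset.notMem_range_self (Finset.mem_filter.1 h).1)]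
  · simp

lemma cntw_add (S : Finset (ZMod N)) (r : ZMod N) (y : ℕ) :
    ∀ z, cntw S r (y + z) = cntw S r y + cntw S (r + (y : ZMod N)) z := by
  intro z
  induction z with
  | zero => simp [cntw]
  | succ z ih =>
      have : y + (z + 1) = (y + z) + 1 := by omega
      rw [this, cntw_succ, ih, cntw_succ]
      have : r + ((y + z : ℕ) : ZMod N) = r + (y : ZMod N) + (z : ZMod N) := by
        push_cast; ring
      rw [this, add_assoc]

lemma cntw_window [NeZero N] (S : Finset (ZMod N)) (r : ZMod N) :
    cntw S r N = S.card := by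
  unfold cntw
  refine Finset.card_bij (fun i _ => r + (i : ZMod N)) ?_ ?_ ?_
  · intro a ha; exact (Finset.mem_filter.1 ha).2
  · intro a ha b hb hab
    have ha' := Finset.mem_range.1 (Finset.mem_filter.1 ha).1
    have hb' := Finset.mem_range.1 (Finset.mem_filter.1 hb).1
    have : (a : ZMod N) = (b : ZMod N) := by
      have := add_left_cancel hab
      exact this
    have := congrArg ZMod.val this
    rwa [ZMod.val_cast_of_lt ha', ZMod.val_cast_of_lt hb'] at this
  · intro x hx
    refine ⟨(x - r).val, Finset.mem_filter.2 ⟨Finset.mem_range.2 (ZMod.val_lt _), ?_⟩, ?_⟩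
    · rw [ZMod.natCast_zmod_val]; simpa using hx
    · show r + (((x - r).val : ℕ) : ZMod N) = x
      rw [ZMod.natCast_zmod_val]; ring


/-- Height function of the configuration read from residue `0`. -/
noncomputable def Hf (s : ℕ) (S : Finset (ZMod N)) (y : ℕ) : ℤ :=
  (s + 1) * (cntw S 0 y : ℤ) - y

/-- The rotation of `S` starting at `r` is a Dyck configuration. -/
def good (s : ℕ) (S : Finset (ZMod N)) (r : ZMod N) : Prop :=
  ∀ y : ℕ, 1 ≤ y → y ≤ N → y + 1 ≤ (s + 1) * cntw S r y

lemma Hf_period [NeZero N] {t s : ℕ} (hN : N = t * (s + 1) - 1) (ht : 1 ≤ t)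
    (S : Finset (ZMod N)) (hS : S.card = t) (y : ℕ) :
    Hf s S (y + N) = Hf s S y + 1 := by
  have hc : cntw S 0 (y + N) = cntw S 0 y + t := by
    rw [cntw_add, cntw_window, hS]
  have h1 : 1 ≤ t * (s + 1) := Nat.one_le_iff_ne_zero.2 (by positivity)
  have h2 : N + 1 = t * (s + 1) := by omega
  have hNZ : (N : ℤ) + 1 = (t : ℤ) * ((s : ℤ) + 1) := by exact_mod_cast h2
  unfold Hf
  rw [hc]
  push_cast
  linear_combination -hNZ

lemma Hf_shift [NeZero N] (s : ℕ) (S : Finset (ZMod N)) (r : ZMod N) (y : ℕ) :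
    Hf s S (r.val + y) = Hf s S r.val + ((s + 1) * (cntw S r y : ℤ) - y) := by
  unfold Hf
  rw [cntw_add]
  rw [show ((0 : ZMod N) + ((r.val : ℕ) : ZMod N)) = r by
    rw [zero_add, ZMod.natCast_zmod_val]]
  push_cast
  ring

lemma good_iff_Hf [NeZero N] (s : ℕ) (S : Finset (ZMod N)) (r : ZMod N) :
    good s S r ↔ ∀ y : ℕ, 1 ≤ y → y ≤ N →
      Hf s S r.val + 1 ≤ Hf s S (r.val + y) := by
  constructor
  · intro h y hy1 hy2
    rw [Hf_shift]
    have := h y hy1 hy2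
    have : ((y : ℤ) + 1) ≤ ((s : ℤ) + 1) * (cntw S r y : ℤ) := by exact_mod_cast this
    linarith
  · intro h y hy1 hy2
    have := h y hy1 hy2
    rw [Hf_shift] at this
    have h2 : ((y : ℤ) + 1) ≤ ((s : ℤ) + 1) * (cntw S r y : ℤ) := by linarith
    exact_mod_cast h2

lemma good_unique [NeZero N] {t s : ℕ} (hN : N = t * (s + 1) - 1) (ht : 1 ≤ t)
    (S : Finset (ZMod N)) (hS : S.card = t) {u v : ZMod N}
    (hu : good s S u) (hv : good s S v) : u = v := by
  have main : ∀ u v : ZMod N, good s S u → good s S v → ¬ (u.val < v.val) := by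
    intro u v hu hv hlt
    have hvN : v.val < N := ZMod.val_lt v
    have huN : u.val < N := ZMod.val_lt u
    have h1 := (good_iff_Hf s S u).1 hu (v.val - u.val) (by omega) (by omega)
    rw [show u.val + (v.val - u.val) = v.val by omega] at h1
    have h2 := (good_iff_Hf s S v).1 hv (u.val + N - v.val) (by omega) (by omega)
    rw [show v.val + (u.val + N - v.val) = u.val + N by omega,
      Hf_period hN ht S hS] at h2
    omega
  have h1 := main u v hu hv
  have h2 := main v u hv hu
  exact ZMod.val_injective N (by omega)

lemma good_exists [NeZero N] {t s : ℕ} (hN : N = t * (s + 1) - 1) (ht : 1 ≤ t)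
    (S : Finset (ZMod N)) (hS : S.card = t) : ∃ r : ZMod N, good s S r := by
  have hN1 : 1 ≤ N := Nat.pos_of_ne_zero (NeZero.ne N)
  have hFne : ((Finset.range N).image (Hf s S)).Nonempty :=
    ⟨_, Finset.mem_image_of_mem _ (Finset.mem_range.2 hN1)⟩
  set μ := ((Finset.range N).image (Hf s S)).min' hFne with hμ
  have hμmem := Finset.min'_mem _ hFne
  have hGne : ((Finset.range N).filter (fun m => Hf s S m = μ)).Nonempty := by
    obtain ⟨m, hm, hm2⟩ := Finset.mem_image.1 hμmem
    exact ⟨m, Finset.mem_filter.2 ⟨hm, hm2⟩⟩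
  set r0 := ((Finset.range N).filter (fun m => Hf s S m = μ)).max' hGne with hr0def
  have hr0mem := Finset.max'_mem _ hGne
  have hr0N : r0 < N := Finset.mem_range.1 (Finset.mem_filter.1 hr0mem).1
  have hr0μ : Hf s S r0 = μ := (Finset.mem_filter.1 hr0mem).2
  have hmin : ∀ m, m < N → μ ≤ Hf s S m := fun m hm =>
    Finset.min'_le _ _ (Finset.mem_image_of_mem _ (Finset.mem_range.2 hm))
  have key : ∀ m, r0 < m → m ≤ r0 + N → Hf s S r0 + 1 ≤ Hf s S m := by
    intro m hm1 hm2
    by_cases hm : m < N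
    · have hge := hmin m hm
      have hne : Hf s S m ≠ μ := by
        intro he
        have : m ≤ r0 := Finset.le_max' _ m (Finset.mem_filter.2 ⟨Finset.mem_range.2 hm, he⟩)
        omega
      omega
    · have hmN : N ≤ m := by omega
      have : Hf s S m = Hf s S (m - N) + 1 := by
        rw [← Hf_period hN ht S hS, Nat.sub_add_cancel hmN]
      have hge := hmin (m - N) (by omega)
      omega
  refine ⟨(r0 : ZMod N), ?_⟩
  rw [good_iff_Hf]
  intro y hy1 hy2
  rw [ZMod.val_cast_of_lt hr0N]
  exact key (r0 + y) (by omega) (by omega)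


/-- downward-closed predicates on `Fin m` are initial segments. -/
lemma downward_count {m : ℕ} (P : Fin m → Prop) [DecidablePred P]
    (hP : ∀ i j : Fin m, i ≤ j → P j → P i) (i : Fin m) :
    P i ↔ i.1 < (Finset.univ.filter P).card := by
  constructor
  · intro hPi
    have hsub : Finset.Iic i ⊆ Finset.univ.filter P := by
      intro j hj
      exact Finset.mem_filter.2 ⟨Finset.mem_univ _, hP j i (Finset.mem_Iic.1 hj) hPi⟩
    have := Finset.card_le_card hsub
    rw [Fin.card_Iic] at this
    omega
  · intro h
    by_contra hPi
    have hsub : Finset.univ.filter P ⊆ Finset.Iio i := by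
      intro j hj
      have hPj := (Finset.mem_filter.1 hj).2
      rcases lt_or_ge j i with h' | h'
      · exact Finset.mem_Iio.2 h'
      · exact absurd (hP i j h' hPj) hPi
    have := Finset.card_le_card hsub
    rw [Fin.card_Iio] at this
    omega

def IsDyck (t s : ℕ) (c : Fin (t - 1) → ℕ) : Prop :=
  Monotone c ∧ ∀ l : Fin (t - 1), c l ≤ (l.1 + 1) * s - 1

noncomputable def encode (t s N : ℕ) (c : Fin (t - 1) → ℕ) : Finset (ZMod N) :=
  insert 0 (Finset.univ.image (fun l : Fin (t - 1) => ((c l + l.1 + 1 : ℕ) : ZMod N)))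

lemma val_bound {t s N : ℕ} (ht : 1 ≤ t) (hs : 1 ≤ s) (hN : N = t * (s + 1) - 1)
    {c : Fin (t - 1) → ℕ} (hc : IsDyck t s c) (l : Fin (t - 1)) :
    c l + l.1 + 1 ≤ (l.1 + 1) * (s + 1) - 1 ∧ (l.1 + 1) * (s + 1) - 1 < N := by
  have hb := hc.2 l
  have ha : l.1 < t - 1 := l.2
  have h0 : 0 < (l.1 + 1) * s := Nat.mul_pos (by omega) hs
  have hexp : (l.1 + 1) * (s + 1) = (l.1 + 1) * s + (l.1 + 1) := by ring
  have hmul : (l.1 + 1) * s ≤ (t - 1) * s := Nat.mul_le_mul_right _ (by omega)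
  have hts : t * s = (t - 1) * s + s := by
    have h' : (t - 1 + 1) * s = (t - 1) * s + s := by ring
    rwa [show t - 1 + 1 = t by omega] at h'
  have htpos : 0 < t * (s + 1) := Nat.mul_pos (by omega) (by omega)
  have hN1 : N + 1 = t * (s + 1) := by omega
  have hts2 : t * (s + 1) = t * s + t := by ring
  omega

lemma vlt {t s : ℕ} (c : Fin (t - 1) → ℕ) (hc : IsDyck t s c)
    {l l' : Fin (t - 1)} (h : l < l') :
    c l + l.1 + 1 < c l' + l'.1 + 1 := by
  have h1 := hc.1 (le_of_lt h)
  have h2 : l.1 < l'.1 := h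
  omega

lemma val_lt_N {t s N : ℕ} (ht : 1 ≤ t) (hs : 1 ≤ s) (hN : N = t * (s + 1) - 1)
    {c : Fin (t - 1) → ℕ} (hc : IsDyck t s c) (l : Fin (t - 1)) :
    c l + l.1 + 1 < N :=
  lt_of_le_of_lt (val_bound ht hs hN hc l).1 (val_bound ht hs hN hc l).2

lemma encode_val {t s N : ℕ} [NeZero N] (ht : 1 ≤ t) (hs : 1 ≤ s)
    (hN : N = t * (s + 1) - 1) {c : Fin (t - 1) → ℕ} (hc : IsDyck t s c) (l : Fin (t - 1)) :
    ((c l + l.1 + 1 : ℕ) : ZMod N).val = c l + l.1 + 1 :=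
  ZMod.val_cast_of_lt (val_lt_N ht hs hN hc l)

lemma cast_inj_of_lt {N : ℕ} [NeZero N] {a b : ℕ} (ha : a < N) (hb : b < N)
    (h : (a : ZMod N) = (b : ZMod N)) : a = b := by
  have := congrArg ZMod.val h
  rwa [ZMod.val_cast_of_lt ha, ZMod.val_cast_of_lt hb] at this

lemma encode_inj_fun {t s N : ℕ} [NeZero N] (ht : 1 ≤ t) (hs : 1 ≤ s)
    (hN : N = t * (s + 1) - 1) {c : Fin (t - 1) → ℕ} (hc : IsDyck t s c) :
    Function.Injective (fun l : Fin (t - 1) => ((c l + l.1 + 1 : ℕ) : ZMod N)) := by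
  intro l l' he
  have heq := cast_inj_of_lt (val_lt_N ht hs hN hc l) (val_lt_N ht hs hN hc l') he
  rcases lt_trichotomy l l' with h | h | h
  · exact absurd heq (by have := vlt c hc h; omega)
  · exact h
  · exact absurd heq (by have := vlt c hc h; omega)

lemma encode_card {t s N : ℕ} [NeZero N] (ht : 1 ≤ t) (hs : 1 ≤ s)
    (hN : N = t * (s + 1) - 1) {c : Fin (t - 1) → ℕ} (hc : IsDyck t s c) :
    (encode t s N c).card = t := by
  have h0 : (0 : ZMod N) ∉ Finset.univ.image
      (fun l : Fin (t - 1) => ((c l + l.1 + 1 : ℕ) : ZMod N)) := by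
    intro h
    obtain ⟨l, _, hl⟩ := Finset.mem_image.1 h
    have := congrArg ZMod.val hl
    rw [encode_val ht hs hN hc l, ZMod.val_zero] at this
    omega
  rw [encode, Finset.card_insert_of_notMem h0,
    Finset.card_image_of_injective _ (encode_inj_fun ht hs hN hc),
    Finset.card_univ, Fintype.card_fin]
  omega

lemma encode_cntw {t s N : ℕ} [NeZero N] (ht : 1 ≤ t) (hs : 1 ≤ s)
    (hN : N = t * (s + 1) - 1) {c : Fin (t - 1) → ℕ} (hc : IsDyck t s c)
    {y : ℕ} (hy1 : 1 ≤ y) (hyN : y ≤ N) :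
    cntw (encode t s N c) 0 y
      = (Finset.univ.filter (fun l : Fin (t - 1) => c l + l.1 + 1 < y)).card + 1 := by
  classical
  set Q := Finset.univ.filter (fun l : Fin (t - 1) => c l + l.1 + 1 < y) with hQ
  have hql : Q.card ≤ t - 1 := by
    have := Finset.card_filter_le Finset.univ (fun l : Fin (t - 1) => c l + l.1 + 1 < y)
    simpa [Finset.card_univ] using this
  have hdc : ∀ i j : Fin (t - 1), i ≤ j → (c j + j.1 + 1 < y) → (c i + i.1 + 1 < y) := by
    intro i j hij hj
    rcases eq_or_lt_of_le hij with rfl | h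
    · exact hj
    · have := vlt c hc h; omega
  have hcount : ∀ i : Fin (t - 1), c i + i.1 + 1 < y ↔ i.1 < Q.card :=
    fun i => downward_count _ hdc i
  have hcntw : cntw (encode t s N c) 0 y
      = ((Finset.range y).filter (fun i : ℕ => ((i : ℕ) : ZMod N) ∈ encode t s N c)).card := by
    unfold cntw
    congr 1
    apply Finset.filter_congr
    intro i _
    rw [zero_add]
  rw [hcntw]
  have hcard : (Finset.range (Q.card + 1)).card
      = ((Finset.range y).filter (fun i : ℕ => ((i : ℕ) : ZMod N) ∈ encode t s N c)).card := by
    apply Finset.card_bij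
      (fun j hj => if hj0 : j = 0 then 0 else
        c ⟨j - 1, by have := Finset.mem_range.1 hj; omega⟩ + (j - 1) + 1)
    · intro j hj
      by_cases hj0 : j = 0
      · subst hj0
        simp only [dif_pos]
        exact Finset.mem_filter.2 ⟨Finset.mem_range.2 (by omega),
          by exact_mod_cast Finset.mem_insert_self _ _⟩
      · rw [dif_neg hj0]
        have hjr := Finset.mem_range.1 hj
        have hlt : j - 1 < t - 1 := by omega
        have hv : ((⟨j - 1, hlt⟩ : Fin (t - 1)) : ℕ) = j - 1 := rfl
        have hly := (hcount ⟨j - 1, hlt⟩).2 (by rw [hv]; omega)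
        rw [hv] at hly
        refine Finset.mem_filter.2 ⟨Finset.mem_range.2 (by omega), ?_⟩
        refine Finset.mem_insert_of_mem ?_
        exact Finset.mem_image_of_mem
          (fun l : Fin (t - 1) => ((c l + l.1 + 1 : ℕ) : ZMod N))
          (Finset.mem_univ (⟨j - 1, hlt⟩ : Fin (t - 1)))
    · intro j hj j' hj' he
      have hjr := Finset.mem_range.1 hj
      have hjr' := Finset.mem_range.1 hj'
      by_cases hj0 : j = 0 <;> by_cases hj0' : j' = 0
      · omega
      · rw [dif_pos hj0, dif_neg hj0'] at he; omega
      · rw [dif_neg hj0, dif_pos hj0'] at he; omega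
      · rw [dif_neg hj0, dif_neg hj0'] at he
        have hlt : j - 1 < t - 1 := by omega
        have hlt' : j' - 1 < t - 1 := by omega
        rcases lt_trichotomy (⟨j - 1, hlt⟩ : Fin (t - 1)) ⟨j' - 1, hlt'⟩ with h | h | h
        · have hv := vlt c hc h
          have e1 : ((⟨j - 1, hlt⟩ : Fin (t - 1)) : ℕ) = j - 1 := rfl
          have e2 : ((⟨j' - 1, hlt'⟩ : Fin (t - 1)) : ℕ) = j' - 1 := rfl
          rw [e1, e2] at hv
          omega
        · have := congrArg Fin.val h
          simp only [] at this
          omega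
        · have hv := vlt c hc h
          have e1 : ((⟨j - 1, hlt⟩ : Fin (t - 1)) : ℕ) = j - 1 := rfl
          have e2 : ((⟨j' - 1, hlt'⟩ : Fin (t - 1)) : ℕ) = j' - 1 := rfl
          rw [e1, e2] at hv
          omega
    · intro b hb
      obtain ⟨hbr, hbm⟩ := Finset.mem_filter.1 hb
      have hby := Finset.mem_range.1 hbr
      rcases Finset.mem_insert.1 hbm with h0 | himg
      · refine ⟨0, Finset.mem_range.2 (by omega), ?_⟩
        rw [dif_pos rfl]
        have : b = 0 := by
          have := congrArg ZMod.val h0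
          rwa [ZMod.val_cast_of_lt (by omega : b < N), ZMod.val_zero] at this
        omega
      · obtain ⟨l, _, hl⟩ := Finset.mem_image.1 himg
        have hbv : b = c l + l.1 + 1 :=
          cast_inj_of_lt (by omega) (val_lt_N ht hs hN hc l) hl.symm
        have hlq : l.1 < Q.card := (hcount l).1 (by omega)
        refine ⟨l.1 + 1, Finset.mem_range.2 (by omega), ?_⟩
        rw [dif_neg (by omega)]
        simp only [Nat.add_sub_cancel]
        have : (⟨l.1, by omega⟩ : Fin (t - 1)) = l := by
          apply Fin.ext; rfl
        rw [this]
        omega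
  rw [← hcard, Finset.card_range]

lemma encode_good {t s N : ℕ} [NeZero N] (ht : 1 ≤ t) (hs : 1 ≤ s)
    (hN : N = t * (s + 1) - 1) {c : Fin (t - 1) → ℕ} (hc : IsDyck t s c) :
    good s (encode t s N c) 0 := by
  intro y hy1 hyN
  rw [encode_cntw ht hs hN hc hy1 hyN]
  set Q := Finset.univ.filter (fun l : Fin (t - 1) => c l + l.1 + 1 < y) with hQ
  have hql : Q.card ≤ t - 1 := by
    have := Finset.card_filter_le Finset.univ (fun l : Fin (t - 1) => c l + l.1 + 1 < y)
    simpa [Finset.card_univ] using this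
  have hdc : ∀ i j : Fin (t - 1), i ≤ j → (c j + j.1 + 1 < y) → (c i + i.1 + 1 < y) := by
    intro i j hij hj
    rcases eq_or_lt_of_le hij with rfl | h
    · exact hj
    · have := vlt c hc h; omega
  by_cases hq : Q.card < t - 1
  · have hv : ((⟨Q.card, hq⟩ : Fin (t - 1)) : ℕ) = Q.card := rfl
    have hnl : ¬ (c ⟨Q.card, hq⟩ + Q.card + 1 < y) := by
      intro hcon
      have h2 := (downward_count (fun l : Fin (t - 1) => c l + l.1 + 1 < y) hdc ⟨Q.card, hq⟩).1 hcon
      exact lt_irrefl _ h2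
    have hub := (val_bound ht hs hN hc ⟨Q.card, hq⟩).1
    rw [hv] at hub
    have hexp : (Q.card + 1) * (s + 1) = (s + 1) * (Q.card + 1) := by ring
    have h0 : 0 < (Q.card + 1) * (s + 1) := Nat.mul_pos (by omega) (by omega)
    omega
  · have hqe : Q.card = t - 1 := by omega
    have htpos : 0 < t * (s + 1) := Nat.mul_pos (by omega) (by omega)
    have hexp : (s + 1) * (Q.card + 1) = t * (s + 1) := by
      rw [hqe, show t - 1 + 1 = t by omega]; ring
    omega

lemma encode_injective {t s N : ℕ} [NeZero N] (ht : 1 ≤ t) (hs : 1 ≤ s)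
    (hN : N = t * (s + 1) - 1) {c c' : Fin (t - 1) → ℕ} (hc : IsDyck t s c)
    (hc' : IsDyck t s c') (he : encode t s N c = encode t s N c') : c = c' := by
  have hnlt : ∀ (c c' : Fin (t - 1) → ℕ), IsDyck t s c → IsDyck t s c' →
      encode t s N c = encode t s N c' →
      ∀ l : Fin (t - 1), (∀ m : Fin (t - 1), m < l → c m = c' m) → ¬ (c l < c' l) := by
    intro c c' hc hc' he l hm hlt
    have hmem : ((c l + l.1 + 1 : ℕ) : ZMod N) ∈ encode t s N c' := by
      rw [← he]
      exact Finset.mem_insert_of_mem (Finset.mem_image_of_mem _ (Finset.mem_univ l))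
    rcases Finset.mem_insert.1 hmem with h0 | himg
    · have := congrArg ZMod.val h0
      rw [encode_val ht hs hN hc l, ZMod.val_zero] at this
      omega
    · obtain ⟨m, _, hml⟩ := Finset.mem_image.1 himg
      have heq : c' m + m.1 + 1 = c l + l.1 + 1 :=
        cast_inj_of_lt (val_lt_N ht hs hN hc' m) (val_lt_N ht hs hN hc l) hml
      rcases lt_trichotomy m l with h | h | h
      · have h1 := hm m h
        have h2 := vlt c hc h
        omega
      · subst h; omega
      · have h1 : c' l ≤ c' m := hc'.1 (le_of_lt h)
        have h2 : l.1 < m.1 := h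
        omega
  have H : ∀ n : ℕ, ∀ l : Fin (t - 1), l.1 < n → c l = c' l := by
    intro n
    induction n with
    | zero => intro l hl; omega
    | succ n ih =>
        intro l hl
        have hm : ∀ m : Fin (t - 1), m < l → c m = c' m := by
          intro m hml
          exact ih m (by have : m.1 < l.1 := hml; omega)
        have h1 := hnlt c c' hc hc' he l hm
        have h2 := hnlt c' c hc' hc he.symm l (fun m hml => (hm m hml).symm)
        omega
  funext l
  exact H (l.1 + 1) l (by omega)

lemma cntw_eq_filter_val {N : ℕ} [NeZero N] (S : Finset (ZMod N))
    {y : ℕ} (hyN : y ≤ N) :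
    cntw S 0 y = ((S.image ZMod.val).filter (· < y)).card := by
  classical
  unfold cntw
  apply Finset.card_bij (fun i _ => i)
  · intro i hi
    obtain ⟨hir, him⟩ := Finset.mem_filter.1 hi
    have hiy := Finset.mem_range.1 hir
    rw [zero_add] at him
    refine Finset.mem_filter.2 ⟨?_, hiy⟩
    refine Finset.mem_image.2 ⟨((i : ℕ) : ZMod N), him, ?_⟩
    exact ZMod.val_cast_of_lt (by omega)
  · intro a _ b _ hab; exact hab
  · intro b hb
    obtain ⟨hbv, hby⟩ := Finset.mem_filter.1 hb
    obtain ⟨x, hx, hxv⟩ := Finset.mem_image.1 hbv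
    refine ⟨b, Finset.mem_filter.2 ⟨Finset.mem_range.2 hby, ?_⟩, rfl⟩
    rw [zero_add, ← hxv, ZMod.natCast_zmod_val]
    exact hx

lemma decode_exists {t s N : ℕ} [NeZero N] (ht : 1 ≤ t) (hs : 1 ≤ s)
    (hN : N = t * (s + 1) - 1) (S : Finset (ZMod N)) (hS : S.card = t)
    (hg : good s S 0) :
    ∃ c : Fin (t - 1) → ℕ, IsDyck t s c ∧ encode t s N c = S := by
  classical
  have hN1 : 1 ≤ N := Nat.pos_of_ne_zero (NeZero.ne N)
  have hN2 : N + 1 = t * (s + 1) := by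
    have h22 : 1 * 2 ≤ t * (s + 1) := Nat.mul_le_mul ht (by omega)
    omega
  set V := S.image ZMod.val with hVdef
  have hV : V.card = t := by
    rw [hVdef, Finset.card_image_of_injective _ (ZMod.val_injective N), hS]
  set p : Fin t ↪o ℕ := V.orderEmbOfFin hV with hpdef
  have hpV : ∀ i, p i ∈ V := fun i => Finset.orderEmbOfFin_mem V hV i
  have hpltN : ∀ i, p i < N := by
    intro i
    obtain ⟨x, _, hxv⟩ := Finset.mem_image.1 (hpV i)
    rw [← hxv]; exact ZMod.val_lt x
  -- counting vs sorted order
  have count_nth : ∀ (i : Fin t) (y : ℕ), p i < y ↔ i.1 < (V.filter (· < y)).card := by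
    intro i y
    constructor
    · intro hpy
      have hsub : (Finset.Iic i).image p ⊆ V.filter (· < y) := by
        intro v hv
        obtain ⟨j, hj, hjv⟩ := Finset.mem_image.1 hv
        refine Finset.mem_filter.2 ⟨hjv ▸ hpV j, ?_⟩
        rw [← hjv]
        exact lt_of_le_of_lt (p.monotone (Finset.mem_Iic.1 hj)) hpy
      have hcard : ((Finset.Iic i).image p).card = i.1 + 1 := by
        rw [Finset.card_image_of_injective _ p.injective, Fin.card_Iic]
      have := Finset.card_le_card hsub
      omega
    · intro h
      by_contra hpy
      push_neg at hpy
      have hsub : V.filter (· < y) ⊆ (Finset.Iio i).image p := by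
        intro v hv
        obtain ⟨hvV, hvy⟩ := Finset.mem_filter.1 hv
        have : v ∈ Set.range p := by
          rw [Finset.range_orderEmbOfFin]
          exact hvV
        obtain ⟨j, hjv⟩ := this
        refine Finset.mem_image.2 ⟨j, Finset.mem_Iio.2 ?_, hjv⟩
        have : p j < p i := by omega
        exact p.strictMono.lt_iff_lt.1 this
      have hcard : ((Finset.Iio i).image p).card ≤ i.1 := by
        rw [Finset.card_image_of_injective _ p.injective, Fin.card_Iio]
      have := Finset.card_le_card hsub
      omega
  have hcnt : ∀ y : ℕ, y ≤ N → cntw S 0 y = (V.filter (· < y)).card := by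
    intro y hy
    rw [cntw_eq_filter_val S hy]
  have hp0 : p ⟨0, by omega⟩ = 0 := by
    have h1 := hg 1 le_rfl hN1
    have h2 : 1 ≤ cntw S 0 1 := by
      by_contra h
      have : cntw S 0 1 = 0 := by omega
      rw [this] at h1; omega
    rw [hcnt 1 hN1] at h2
    have := (count_nth ⟨0, by omega⟩ 1).2 (by simpa using h2)
    omega
  have hpb : ∀ i : Fin t, 1 ≤ i.1 → p i ≤ i.1 * (s + 1) - 1 := by
    intro i hi1
    set y := i.1 * (s + 1) with hy
    have hit : i.1 ≤ t - 1 := by have := i.2; omega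
    have hyN : y ≤ N := by
      have h1 : i.1 * (s + 1) ≤ (t - 1) * (s + 1) := Nat.mul_le_mul_right _ hit
      have h2 : (t - 1 + 1) * (s + 1) = (t - 1) * (s + 1) + (s + 1) := by ring
      rw [show t - 1 + 1 = t by omega] at h2
      omega
    have hy1 : 1 ≤ y := by
      have : 1 * 1 ≤ i.1 * (s + 1) := Nat.mul_le_mul (by omega) (by omega)
      omega
    have hgy := hg y hy1 hyN
    have hcg : i.1 < cntw S 0 y := by
      by_contra hle
      push_neg at hle
      have : (s + 1) * cntw S 0 y ≤ (s + 1) * i.1 := Nat.mul_le_mul_left _ hle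
      have hcomm : (s + 1) * i.1 = i.1 * (s + 1) := by ring
      omega
    rw [hcnt y hyN] at hcg
    have := (count_nth i y).2 hcg
    omega
  -- monotone steps
  have pstep : ∀ d : ℕ, ∀ i j : Fin t, i.1 + d = j.1 → p i + d ≤ p j := by
    intro d
    induction d with
    | zero =>
        intro i j hij
        have : i = j := Fin.ext (by omega)
        subst this; omega
    | succ d ih =>
        intro i j hij
        have hj1 : j.1 - 1 < t := by omega
        have h1 := ih i ⟨j.1 - 1, hj1⟩ (by simp; omega)
        have h2 : p ⟨j.1 - 1, hj1⟩ < p j := p.strictMono (by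
          show (⟨j.1 - 1, hj1⟩ : Fin t) < j
          rw [Fin.lt_def]
          simp
          omega)
        omega
  have hp0le : ∀ i : Fin t, i.1 ≤ p i := by
    intro i
    have := pstep i.1 ⟨0, by omega⟩ i (by simp)
    rw [hp0] at this
    omega
  set c : Fin (t - 1) → ℕ := fun l => p ⟨l.1 + 1, by have := l.2; omega⟩ - (l.1 + 1) with hcdef
  have hkey : ∀ l : Fin (t - 1), c l + l.1 + 1 = p ⟨l.1 + 1, by have := l.2; omega⟩ := by
    intro l
    have h := hp0le ⟨l.1 + 1, by have := l.2; omega⟩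
    simp only [Fin.val_mk] at h
    simp only [hcdef]
    omega
  have hcD : IsDyck t s c := by
    constructor
    · intro l l' hll
      have hl2 := l.2
      have hl2' := l'.2
      have hv : l.1 ≤ l'.1 := hll
      have := pstep (l'.1 - l.1) ⟨l.1 + 1, by omega⟩ ⟨l'.1 + 1, by omega⟩ (by simp; omega)
      simp only [hcdef]
      omega
    · intro l
      have hl2 := l.2
      have hb := hpb ⟨l.1 + 1, by omega⟩ (by simp)
      simp only [Fin.val_mk] at hb
      have hexp : (l.1 + 1) * (s + 1) = (l.1 + 1) * s + (l.1 + 1) := by ring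
      simp only [hcdef]
      have hge : 1 ≤ (l.1 + 1) * s := by
        have : 1 * 1 ≤ (l.1 + 1) * s := Nat.mul_le_mul (by omega) hs
        omega
      omega
  refine ⟨c, hcD, ?_⟩
  -- encode c = S by inclusion + cardinality
  apply Finset.eq_of_subset_of_card_le
  · intro x hx
    rcases Finset.mem_insert.1 hx with h0 | himg
    · subst h0
      have h0V : (0 : ℕ) ∈ V := by rw [← hp0]; exact hpV _
      obtain ⟨z, hz, hzv⟩ := Finset.mem_image.1 h0V
      have : z = 0 := by
        apply ZMod.val_injective
        rw [hzv, ZMod.val_zero]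
      rwa [← this]
    · obtain ⟨l, _, hl⟩ := Finset.mem_image.1 himg
      have hpVl := hpV ⟨l.1 + 1, by have := l.2; omega⟩
      obtain ⟨z, hz, hzv⟩ := Finset.mem_image.1 hpVl
      rw [← hl, hkey l, ← hzv, ZMod.natCast_zmod_val]
      exact hz
  · rw [hS, encode_card ht hs hN hcD]

lemma cntw_rot {N : ℕ} (S : Finset (ZMod N)) (a r : ZMod N) (y : ℕ) :
    cntw (S.image (· + a)) (r + a) y = cntw S r y := by
  classical
  unfold cntw
  congr 1
  apply Finset.filter_congr
  intro i _
  constructor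
  · intro h
    obtain ⟨x, hx, hxe⟩ := Finset.mem_image.1 h
    have h2 : x + a = (r + (i : ZMod N)) + a := by rw [hxe]; ring
    have h3 : x = r + (i : ZMod N) := add_right_cancel h2
    rwa [← h3]
  · intro h
    exact Finset.mem_image.2 ⟨r + (i : ZMod N), h, by ring⟩

lemma good_rot {N : ℕ} (s : ℕ) (S : Finset (ZMod N)) (a r : ZMod N) :
    good s (S.image (· + a)) (r + a) ↔ good s S r := by
  unfold good
  constructor
  · intro h y h1 h2
    have := h y h1 h2
    rwa [cntw_rot] at this
  · intro h y h1 h2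
    rw [cntw_rot]
    exact h y h1 h2

/-- The cycle-lemma count: `|Dyck(t,s)| * N = choose N t` where `N = t(s+1)-1`. -/
theorem card_isDyck_mul {t s : ℕ} (ht : 1 ≤ t) (hs : 1 ≤ s) :
    Nat.card {c : Fin (t - 1) → ℕ // IsDyck t s c} * (t * (s + 1) - 1)
      = (t * (s + 1) - 1).choose t := by
  classical
  set N := t * (s + 1) - 1 with hNdef
  have hN : N = t * (s + 1) - 1 := rfl
  have h22 : 1 * 2 ≤ t * (s + 1) := Nat.mul_le_mul ht (by omega)
  have hN2 : N + 1 = t * (s + 1) := by omega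
  have : NeZero N := ⟨by omega⟩
  have hrotinj : ∀ r : ZMod N, Function.Injective (fun x : ZMod N => x + r) :=
    fun r x y h => by simpa using congrArg (· + (-r)) h
  set φ : ZMod N × {c : Fin (t - 1) → ℕ // IsDyck t s c} →
      {S : Finset (ZMod N) // S.card = t} := fun rc =>
    ⟨(encode t s N rc.2.1).image (· + rc.1), by
      rw [Finset.card_image_of_injective _ (hrotinj rc.1), encode_card ht hs hN rc.2.2]⟩
    with hφ
  have hgoodφ : ∀ (r : ZMod N) (c : {c : Fin (t - 1) → ℕ // IsDyck t s c}),
      good s ((encode t s N c.1).image (· + r)) r := by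
    intro r c
    have := (good_rot s (encode t s N c.1) r 0).2 (encode_good ht hs hN c.2)
    simpa using this
  have hbij : Function.Bijective φ := by
    constructor
    · rintro ⟨r, c⟩ ⟨r', c'⟩ he
      have heS : (encode t s N c.1).image (· + r) = (encode t s N c'.1).image (· + r') :=
        congrArg Subtype.val he
      have hcard : ((encode t s N c.1).image (· + r)).card = t := by
        rw [Finset.card_image_of_injective _ (hrotinj r), encode_card ht hs hN c.2]
      have hg1 := hgoodφ r c
      have hg2 := hgoodφ r' c'
      rw [← heS] at hg2
      have hrr : r = r' := good_unique hN ht _ hcard hg1 hg2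
      subst hrr
      have hEE : encode t s N c.1 = encode t s N c'.1 := by
        apply Finset.image_injective (hrotinj r)
        exact heS
      have : c.1 = c'.1 := encode_injective ht hs hN c.2 c'.2 hEE
      exact Prod.ext rfl (Subtype.ext this)
    · rintro ⟨S, hScard⟩
      obtain ⟨r, hr⟩ := good_exists hN ht S hScard
      set T := S.image (· + (-r)) with hT
      have hTcard : T.card = t := by
        rw [hT, Finset.card_image_of_injective _ (hrotinj (-r)), hScard]
      have hTgood : good s T 0 := by
        have h3 := (good_rot s S (-r) r).2 hr
        rw [show r + (-r) = (0 : ZMod N) by ring] at h3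
        exact h3
      obtain ⟨c, hcD, hcE⟩ := decode_exists ht hs hN T hTcard hTgood
      refine ⟨(r, ⟨c, hcD⟩), ?_⟩
      apply Subtype.ext
      show (encode t s N c).image (· + r) = S
      rw [hcE, hT, Finset.image_image]
      have : ((· + r) ∘ (· + (-r))) = (id : ZMod N → ZMod N) := by
        funext x; simp
      rw [this, Finset.image_id]
  have hcount := Nat.card_eq_of_bijective φ hbij
  rw [Nat.card_prod, Nat.card_zmod] at hcount
  have hfin : Nat.card {S : Finset (ZMod N) // S.card = t} = N.choose t := by
    rw [Nat.card_eq_fintype_card]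
    have := Fintype.card_finset_len (α := ZMod N) t
    rwa [ZMod.card] at this
  rw [hfin] at hcount
  rw [mul_comm]
  exact hcount

lemma finite_bounded {m : ℕ} (P : (Fin m → ℕ) → Prop) (g : ℕ)
    (h : ∀ c, P c → ∀ l, c l ≤ g) : Finite {c : Fin m → ℕ // P c} := by
  let F : {c : Fin m → ℕ // P c} → (Fin m → Fin (g + 1)) := fun c l => ⟨c.1 l, by
    have := h c.1 c.2 l; omega⟩
  have hF : Function.Injective F := by
    intro c c' he
    apply Subtype.ext
    funext l
    have := congrArg (fun f => (f l : ℕ)) he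
    simpa [F] using this
  exact Finite.of_injective F hF

lemma isDyck_le {t s : ℕ} {c : Fin (t - 1) → ℕ} (hc : IsDyck t s c) (l : Fin (t - 1)) :
    c l ≤ t * s := by
  have hb := hc.2 l
  have hl := l.2
  have := Nat.mul_le_mul_right s (show l.1 + 1 ≤ t by omega)
  omega

lemma isDyck_finite (t s : ℕ) : Finite {c : Fin (t - 1) → ℕ // IsDyck t s c} :=
  finite_bounded _ (t * s) (fun c hc l => isDyck_le hc l)

lemma card_isDyck_eq_Cminus (t n : ℕ) (ht : 1 ≤ t) :
    (Nat.card {c : Fin (t - 1) → ℕ // IsDyck t (n + 1) c} : ℚ) = Cminus t n := by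
  have hnum := card_isDyck_mul (t := t) (s := n + 1) ht (by omega)
  have harg : t + t * (n + 1) - 1 = t * (n + 1 + 1) - 1 := by
    have : t + t * (n + 1) = t * (n + 1 + 1) := by ring
    omega
  have hNpos : 0 < t * (n + 1 + 1) - 1 := by
    have h22 : 1 * 2 ≤ t * (n + 1 + 1) := Nat.mul_le_mul ht (by omega)
    omega
  have hne : ((t * (n + 1 + 1) - 1 : ℕ) : ℚ) ≠ 0 := Nat.cast_ne_zero.2 (by omega)
  rw [Cminus, harg, eq_div_iff hne]
  exact_mod_cast hnum

lemma floor_eq (k n m : ℕ) (hk : 1 ≤ k) (hn : 1 ≤ n) (hm1 : 1 ≤ m) (hm2 : m ≤ 2 * k - 1) :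
    (2 * k * (n + 1) - 2) * m / (2 * k)
      = if m ≤ k then m * (n + 1) - 1 else m * (n + 1) - 2 := by
  have h0 : 1 * 2 ≤ m * (n + 1) := Nat.mul_le_mul hm1 (by omega)
  have hA : (2 * k * (n + 1) - 2) * m = 2 * k * (n + 1) * m - 2 * m := Nat.sub_mul _ _ _
  have hA2 : 2 * k * (n + 1) * m = 2 * k * (m * (n + 1)) := by ring
  have h2k : 2 * 1 ≤ 2 * k * (n + 1) := Nat.mul_le_mul (by omega) (by omega)
  by_cases hmk : m ≤ k
  · rw [if_pos hmk]
    have hB : 2 * k * (m * (n + 1) - 1 + 1) = 2 * k * (m * (n + 1) - 1) + 2 * k := by ring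
    rw [show m * (n + 1) - 1 + 1 = m * (n + 1) by omega] at hB
    have hnum : (2 * k * (n + 1) - 2) * m = 2 * k * (m * (n + 1) - 1) + (2 * k - 2 * m) := by
      omega
    rw [hnum, Nat.mul_add_div (by omega), Nat.div_eq_of_lt (by omega)]
    omega
  · rw [if_neg hmk]
    have hB : 2 * k * (m * (n + 1) - 2 + 2) = 2 * k * (m * (n + 1) - 2) + 2 * k * 2 := by ring
    rw [show m * (n + 1) - 2 + 2 = m * (n + 1) by omega] at hB
    have hnum : (2 * k * (n + 1) - 2) * m = 2 * k * (m * (n + 1) - 2) + (4 * k - 2 * m) := by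
      omega
    rw [hnum, Nat.mul_add_div (by omega), Nat.div_eq_of_lt (by omega)]
    omega

def Bad (k n : ℕ) (c : Fin (2 * k - 1) → ℕ) : Prop :=
  ∃ l : Fin (2 * k - 1), k ≤ l.1 ∧ c l = (l.1 + 1) * (n + 1) - 1

def Touch (k n m : ℕ) (c : Fin (2 * k - 1) → ℕ) : Prop :=
  IsDyck (2 * k) (n + 1) c
    ∧ (∃ l : Fin (2 * k - 1), l.1 + 1 = m ∧ c l = m * (n + 1) - 1)
    ∧ ∀ l : Fin (2 * k - 1), m ≤ l.1 → c l ≠ (l.1 + 1) * (n + 1) - 1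

lemma PL_iff (k n : ℕ) (hk : 1 ≤ k) (hn : 1 ≤ n) (c : Fin (2 * k - 1) → ℕ) :
    (Monotone c ∧ ∀ l : Fin (2 * k - 1), c l ≤ (2 * k * (n + 1) - 2) * (l.1 + 1) / (2 * k))
      ↔ (IsDyck (2 * k) (n + 1) c ∧ ¬ Bad k n c) := by
  have hfl : ∀ l : Fin (2 * k - 1), (2 * k * (n + 1) - 2) * (l.1 + 1) / (2 * k)
      = if l.1 + 1 ≤ k then (l.1 + 1) * (n + 1) - 1 else (l.1 + 1) * (n + 1) - 2 := by
    intro l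
    exact floor_eq k n (l.1 + 1) hk hn (by omega) (by have := l.2; omega)
  have hprod : ∀ l : Fin (2 * k - 1), 1 * 2 ≤ (l.1 + 1) * (n + 1) :=
    fun l => Nat.mul_le_mul (by omega) (by omega)
  constructor
  · rintro ⟨hmono, hb⟩
    refine ⟨⟨hmono, ?_⟩, ?_⟩
    · intro l
      have := hb l
      rw [hfl l] at this
      split at this <;> omega
    · rintro ⟨l, hlk, hle⟩
      have := hb l
      rw [hfl l, if_neg (by omega)] at this
      have := hprod l
      omega
  · rintro ⟨⟨hmono, hb⟩, hnb⟩
    refine ⟨hmono, ?_⟩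
    intro l
    rw [hfl l]
    by_cases hlk : l.1 + 1 ≤ k
    · rw [if_pos hlk]; exact hb l
    · rw [if_neg hlk]
      have h1 := hb l
      have h2 : ¬ (k ≤ l.1 ∧ c l = (l.1 + 1) * (n + 1) - 1) := fun hcon => hnb ⟨l, hcon⟩
      have := hprod l
      omega

lemma split_card (k n : ℕ) (hk : 1 ≤ k) (hn : 1 ≤ n) :
    Nat.card {c : Fin (2 * k - 1) → ℕ // IsDyck (2 * k) (n + 1) c}
      = Nat.card {c : Fin (2 * k - 1) → ℕ // IsDyck (2 * k) (n + 1) c ∧ Bad k n c}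
        + dyckCount (2 * k) (2 * k * (n + 1) - 2) := by
  classical
  have hfin1 : Finite {c : Fin (2 * k - 1) → ℕ // IsDyck (2 * k) (n + 1) c ∧ Bad k n c} :=
    finite_bounded _ (2 * k * (n + 1)) (fun c hc l => isDyck_le hc.1 l)
  have hfin2 : Finite {c : Fin (2 * k - 1) → ℕ // IsDyck (2 * k) (n + 1) c ∧ ¬ Bad k n c} :=
    finite_bounded _ (2 * k * (n + 1)) (fun c hc l => isDyck_le hc.1 l)
  have e1 : {c : Fin (2 * k - 1) → ℕ // IsDyck (2 * k) (n + 1) c}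
      ≃ {c : Fin (2 * k - 1) → ℕ // IsDyck (2 * k) (n + 1) c ∧ Bad k n c}
        ⊕ {c : Fin (2 * k - 1) → ℕ // IsDyck (2 * k) (n + 1) c ∧ ¬ Bad k n c} :=
    ((Equiv.sumCompl (fun y : {c : Fin (2 * k - 1) → ℕ // IsDyck (2 * k) (n + 1) c} =>
        Bad k n y.1)).symm).trans
      (Equiv.sumCongr
        (Equiv.subtypeSubtypeEquivSubtypeInter (fun c => IsDyck (2 * k) (n + 1) c)
          (fun c => Bad k n c))
        (Equiv.subtypeSubtypeEquivSubtypeInter (fun c => IsDyck (2 * k) (n + 1) c)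
          (fun c => ¬ Bad k n c)))
  rw [Nat.card_congr e1, Nat.card_sum]
  congr 1
  rw [dyckCount]
  exact Nat.card_congr (Equiv.subtypeEquivRight (fun c => PL_iff k n hk hn c)).symm

def glue (k n m : ℕ) (p : Fin (m - 1) → ℕ) (d : Fin (2 * k - m - 1) → ℕ) :
    Fin (2 * k - 1) → ℕ :=
  fun l =>
    if h : l.1 + 1 < m then p ⟨l.1, by omega⟩
    else if h2 : l.1 + 1 = m then m * (n + 1) - 1
    else d ⟨l.1 - m, by have := l.2; omega⟩ + (m * (n + 1) - 1)

section Glue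

variable {k n m : ℕ} {p : Fin (m - 1) → ℕ} {d : Fin (2 * k - m - 1) → ℕ}

lemma glue_lt {l : Fin (2 * k - 1)} (h : l.1 + 1 < m) :
    glue k n m p d l = p ⟨l.1, by omega⟩ := dif_pos h

lemma glue_eq {l : Fin (2 * k - 1)} (h : l.1 + 1 = m) :
    glue k n m p d l = m * (n + 1) - 1 := by
  rw [glue, dif_neg (by omega), dif_pos h]

lemma glue_gt {l : Fin (2 * k - 1)} (h : m ≤ l.1) :
    glue k n m p d l = d ⟨l.1 - m, by have := l.2; omega⟩ + (m * (n + 1) - 1) := by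
  rw [glue, dif_neg (by omega), dif_neg (by omega)]

lemma glue_lt' (i : Fin (m - 1)) (h : i.1 < 2 * k - 1) :
    glue k n m p d ⟨i.1, h⟩ = p i := by
  rw [glue_lt (show (⟨i.1, h⟩ : Fin (2 * k - 1)).1 + 1 < m by
    have := i.2; simp only [Fin.val_mk]; omega)]

lemma glue_gt' (i : Fin (2 * k - m - 1)) (h : m + i.1 < 2 * k - 1) :
    glue k n m p d ⟨m + i.1, h⟩ = d i + (m * (n + 1) - 1) := by
  rw [glue_gt (show m ≤ (⟨m + i.1, h⟩ : Fin (2 * k - 1)).1 by simp only [Fin.val_mk]; omega)]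
  congr 1
  exact congrArg d (Fin.ext (by simp only [Fin.val_mk]; omega))

end Glue

lemma glue_touch (k n m : ℕ) (hk : 1 ≤ k) (hn : 1 ≤ n) (hm1 : k + 1 ≤ m)
    (hm2 : m ≤ 2 * k - 1) {p : Fin (m - 1) → ℕ} {d : Fin (2 * k - m - 1) → ℕ}
    (hp : IsDyck m (n + 1) p) (hd : IsDyck (2 * k - m) (n + 1) d) :
    Touch k n m (glue k n m p d) := by
  have hk2 : 2 ≤ 2 * k - 1 := by omega
  have hprodm : 1 * 2 ≤ m * (n + 1) := Nat.mul_le_mul (by omega) (by omega)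
  -- p is bounded by the touch value
  have hub1 : ∀ i : Fin (m - 1), p i ≤ m * (n + 1) - 1 := by
    intro i
    have hb := hp.2 i
    have h2 : (i.1 + 1) * (n + 1) ≤ m * (n + 1) :=
      Nat.mul_le_mul_right _ (by have := i.2; omega)
    omega
  -- the value of the tail is below the strict bound
  have hub3 : ∀ (l : Fin (2 * k - 1)) (h : m ≤ l.1),
      d ⟨l.1 - m, by have := l.2; omega⟩ + (m * (n + 1) - 1)
        ≤ (l.1 + 1) * (n + 1) - 2 := by
    intro l h
    have hb := hd.2 ⟨l.1 - m, by have := l.2; omega⟩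
    have hsum : (l.1 - m + 1) + m = l.1 + 1 := by omega
    have hexp : ((l.1 - m + 1) + m) * (n + 1) = (l.1 - m + 1) * (n + 1) + m * (n + 1) := by
      ring
    rw [hsum] at hexp
    have hge : 1 * 1 ≤ (l.1 - m + 1) * (n + 1) := Nat.mul_le_mul (by omega) (by omega)
    simp only [Fin.val_mk] at hb
    omega
  refine ⟨⟨?_, ?_⟩, ?_, ?_⟩
  · -- monotone
    intro l l' hle
    have lv : l.1 ≤ l'.1 := hle
    by_cases h1 : l.1 + 1 < m
    · rw [glue_lt h1]
      by_cases h1' : l'.1 + 1 < m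
      · rw [glue_lt h1']
        exact hp.1 (show (⟨l.1, by omega⟩ : Fin (m - 1)) ≤ ⟨l'.1, by omega⟩ from lv)
      · by_cases h2' : l'.1 + 1 = m
        · rw [glue_eq h2']
          exact hub1 _
        · rw [glue_gt (by omega)]
          have := hub1 (⟨l.1, by omega⟩ : Fin (m - 1))
          omega
    · by_cases h2 : l.1 + 1 = m
      · rw [glue_eq h2]
        by_cases h1' : l'.1 + 1 < m
        · exfalso; omega
        · by_cases h2' : l'.1 + 1 = m
          · rw [glue_eq h2']
          · rw [glue_gt (by omega)]
            omega
      · rw [glue_gt (by omega)]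
        by_cases h1' : l'.1 + 1 < m
        · exfalso; omega
        · by_cases h2' : l'.1 + 1 = m
          · exfalso; omega
          · rw [glue_gt (by omega)]
            have hmono := hd.1 (show (⟨l.1 - m, by have := l.2; omega⟩ : Fin (2 * k - m - 1))
              ≤ ⟨l'.1 - m, by have := l'.2; omega⟩ from by
                show l.1 - m ≤ l'.1 - m
                omega)
            omega
  · -- bounds
    intro l
    by_cases h1 : l.1 + 1 < m
    · rw [glue_lt h1]
      exact hp.2 _
    · by_cases h2 : l.1 + 1 = m
      · rw [glue_eq h2, h2]
      · rw [glue_gt (by omega)]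
        have := hub3 l (by omega)
        have hge : 1 * 2 ≤ (l.1 + 1) * (n + 1) := Nat.mul_le_mul (by omega) (by omega)
        omega
  · -- touch at m-1
    refine ⟨⟨m - 1, by omega⟩, by simp only [Fin.val_mk]; omega, ?_⟩
    rw [glue_eq (by simp only [Fin.val_mk]; omega)]
  · -- no touch at or beyond m
    intro l hml
    rw [glue_gt hml]
    have := hub3 l hml
    have hge : 1 * 2 ≤ (l.1 + 1) * (n + 1) := Nat.mul_le_mul (by omega) (by omega)
    omega

lemma touch_card (k n m : ℕ) (hk : 1 ≤ k) (hn : 1 ≤ n) (hm1 : k + 1 ≤ m)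
    (hm2 : m ≤ 2 * k - 1) :
    Nat.card {c : Fin (2 * k - 1) → ℕ // Touch k n m c}
      = Nat.card {p : Fin (m - 1) → ℕ // IsDyck m (n + 1) p}
        * Nat.card {d : Fin (2 * k - m - 1) → ℕ // IsDyck (2 * k - m) (n + 1) d} := by
  rw [← Nat.card_prod]
  refine (Nat.card_eq_of_bijective (fun pd => ⟨glue k n m pd.1.1 pd.2.1,
    glue_touch k n m hk hn hm1 hm2 pd.1.2 pd.2.2⟩) ⟨?_, ?_⟩).symm
  · -- injective
    rintro ⟨⟨p, hp⟩, ⟨d, hd⟩⟩ ⟨⟨p', hp'⟩, ⟨d', hd'⟩⟩ he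
    have heq : glue k n m p d = glue k n m p' d' := congrArg Subtype.val he
    have hpe : p = p' := by
      funext i
      have hi := i.2
      have hcf := congrFun heq ⟨i.1, by omega⟩
      rw [glue_lt' i (by omega), glue_lt' i (by omega)] at hcf
      exact hcf
    have hde : d = d' := by
      funext i
      have hi := i.2
      have hcf := congrFun heq ⟨m + i.1, by omega⟩
      rw [glue_gt' i (by omega), glue_gt' i (by omega)] at hcf
      omega
    subst hpe; subst hde; rfl
  · -- surjective
    rintro ⟨c, hD, htouch, hno⟩
    obtain ⟨l0, hl01, hl02⟩ := htouch
    have hc0 : ∀ l : Fin (2 * k - 1), l.1 = m - 1 → c l = m * (n + 1) - 1 := by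
      intro l hl
      have : l = l0 := Fin.ext (by omega)
      rw [this]; exact hl02
    have hprodm : 1 * 2 ≤ m * (n + 1) := Nat.mul_le_mul (by omega) (by omega)
    -- prefix
    have hpD : IsDyck m (n + 1) (fun i : Fin (m - 1) => c ⟨i.1, by have := i.2; omega⟩) := by
      constructor
      · intro i j hij
        exact hD.1 (show (⟨i.1, by have := i.2; omega⟩ : Fin (2 * k - 1))
          ≤ ⟨j.1, by have := j.2; omega⟩ from (hij : i.1 ≤ j.1))
      · intro i
        exact hD.2 ⟨i.1, by have := i.2; omega⟩
    -- tail
    have htD : IsDyck (2 * k - m) (n + 1)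
        (fun i : Fin (2 * k - m - 1) => c ⟨m + i.1, by have := i.2; omega⟩
          - (m * (n + 1) - 1)) := by
      constructor
      · intro i j hij
        have := hD.1 (show (⟨m + i.1, by have := i.2; omega⟩ : Fin (2 * k - 1))
          ≤ ⟨m + j.1, by have := j.2; omega⟩ from by
            show m + i.1 ≤ m + j.1
            have : i.1 ≤ j.1 := hij
            omega)
        exact Nat.sub_le_sub_right this _
      · intro i
        have hb := hD.2 ⟨m + i.1, by have := i.2; omega⟩
        have hne := hno ⟨m + i.1, by have := i.2; omega⟩ (by simp only [Fin.val_mk]; omega)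
        simp only [Fin.val_mk] at hb hne ⊢
        have hsum : (i.1 + 1) + m = m + i.1 + 1 := by omega
        have hexp : ((i.1 + 1) + m) * (n + 1) = (i.1 + 1) * (n + 1) + m * (n + 1) := by ring
        rw [hsum] at hexp
        have hge : 1 * 1 ≤ (i.1 + 1) * (n + 1) := Nat.mul_le_mul (by omega) (by omega)
        omega
    refine ⟨⟨⟨_, hpD⟩, ⟨_, htD⟩⟩, ?_⟩
    apply Subtype.ext
    show glue k n m _ _ = c
    funext l
    by_cases h1 : l.1 + 1 < m
    · rw [glue_lt h1]
    · by_cases h2 : l.1 + 1 = m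
      · rw [glue_eq h2]
        exact (hc0 l (by omega)).symm
      · rw [glue_gt (by omega)]
        have hge : c ⟨m - 1, by omega⟩ ≤ c l := hD.1 (show (⟨m - 1, by omega⟩ : Fin (2 * k - 1)) ≤ l from by
          show m - 1 ≤ l.1
          omega)
        rw [hc0 ⟨m - 1, by omega⟩ (by simp only [Fin.val_mk])] at hge
        have hidx : m + (l.1 - m) = l.1 := by omega
        have : c ⟨m + (l.1 - m), by have := l.2; omega⟩ = c l := congrArg c (Fin.ext hidx)
        simp only [Fin.val_mk]
        omega

lemma touch_finite (k n m : ℕ) : Finite {c : Fin (2 * k - 1) → ℕ // Touch k n m c} :=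
  finite_bounded _ (2 * k * (n + 1)) (fun c hc l => isDyck_le hc.1 l)

lemma bad_card (k n : ℕ) (hk : 1 ≤ k) (hn : 1 ≤ n) :
    Nat.card {c : Fin (2 * k - 1) → ℕ // IsDyck (2 * k) (n + 1) c ∧ Bad k n c}
      = ∑ m ∈ Finset.Icc (k + 1) (2 * k - 1),
          Nat.card {c : Fin (2 * k - 1) → ℕ // Touch k n m c} := by
  classical
  have hTB : ∀ (m : ℕ), m ∈ Finset.Icc (k + 1) (2 * k - 1) →
      ∀ c, Touch k n m c → IsDyck (2 * k) (n + 1) c ∧ Bad k n c := by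
    intro m hm c hc
    obtain ⟨hm1, hm2⟩ := Finset.mem_Icc.1 hm
    obtain ⟨l, hl1, hl2⟩ := hc.2.1
    refine ⟨hc.1, ⟨l, by omega, ?_⟩⟩
    rw [← hl1] at hl2
    exact hl2
  have hdisj : ∀ (m m' : ℕ) c, m < m' → Touch k n m c → Touch k n m' c → False := by
    intro m m' c hmm hc hc'
    obtain ⟨l', hl1', hl2'⟩ := hc'.2.1
    have := hc.2.2 l' (by omega)
    rw [hl1'] at this
    exact this hl2'
  set G : (Σ m : (Finset.Icc (k + 1) (2 * k - 1) : Finset ℕ),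
      {c : Fin (2 * k - 1) → ℕ // Touch k n m.1 c}) →
      {c : Fin (2 * k - 1) → ℕ // IsDyck (2 * k) (n + 1) c ∧ Bad k n c} :=
    fun x => ⟨x.2.1, hTB x.1.1 x.1.2 x.2.1 x.2.2⟩ with hG
  have hGbij : Function.Bijective G := by
    constructor
    · rintro ⟨⟨m, hm⟩, ⟨c, hc⟩⟩ ⟨⟨m', hm'⟩, ⟨c', hc'⟩⟩ he
      have hcc : c = c' := congrArg Subtype.val he
      subst hcc
      have hmm : m = m' := by
        rcases lt_trichotomy m m' with h | h | h
        · exact absurd (hdisj m m' c h hc hc') (fun x => x)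
        · exact h
        · exact absurd (hdisj m' m c h hc' hc) (fun x => x)
      subst hmm
      rfl
    · rintro ⟨c, hD, hbad⟩
      set L := Finset.univ.filter
        (fun l : Fin (2 * k - 1) => k ≤ l.1 ∧ c l = (l.1 + 1) * (n + 1) - 1) with hL
      have hLne : L.Nonempty := by
        obtain ⟨l, hl1, hl2⟩ := hbad
        exact ⟨l, Finset.mem_filter.2 ⟨Finset.mem_univ _, hl1, hl2⟩⟩
      set ℓ := L.max' hLne with hℓ
      have hℓL := Finset.max'_mem L hLne
      obtain ⟨-, hℓk, hℓv⟩ := Finset.mem_filter.1 hℓL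
      have hℓ2 := ℓ.2
      have hmI : ℓ.1 + 1 ∈ Finset.Icc (k + 1) (2 * k - 1) := Finset.mem_Icc.2 (by omega)
      have hto : Touch k n (ℓ.1 + 1) c := by
        refine ⟨hD, ⟨ℓ, rfl, hℓv⟩, ?_⟩
        intro l hml hcon
        have hlL : l ∈ L := Finset.mem_filter.2 ⟨Finset.mem_univ _, by omega, hcon⟩
        have := Finset.le_max' L l hlL
        have hvle : l.1 ≤ ℓ.1 := this
        omega
      exact ⟨⟨⟨ℓ.1 + 1, hmI⟩, ⟨c, hto⟩⟩, rfl⟩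
  letI : ∀ m : ℕ, Fintype {c : Fin (2 * k - 1) → ℕ // Touch k n m c} :=
    fun m => @Fintype.ofFinite _ (touch_finite k n m)
  rw [← Nat.card_eq_of_bijective G hGbij, Nat.card_eq_fintype_card, Fintype.card_sigma]
  rw [← Finset.sum_coe_sort (Finset.Icc (k + 1) (2 * k - 1))
    (fun m => Nat.card {c : Fin (2 * k - 1) → ℕ // Touch k n m c})]
  exact Finset.sum_congr rfl (fun m _ => Nat.card_eq_fintype_card.symm)

lemma sum_reindex (k n : ℕ) (hk : 1 ≤ k) :
    ∑ m ∈ Finset.Icc (k + 1) (2 * k - 1), Cminus m n * Cminus (2 * k - m) n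
      = ∑ j ∈ Finset.Icc 1 (k - 1), Cminus (2 * k - j) n * Cminus j n := by
  refine Finset.sum_bij' (fun m _ => 2 * k - m) (fun j _ => 2 * k - j) ?_ ?_ ?_ ?_ ?_
  · intro m hm
    obtain ⟨h1, h2⟩ := Finset.mem_Icc.1 hm
    show 2 * k - m ∈ Finset.Icc 1 (k - 1)
    exact Finset.mem_Icc.2 (by omega)
  · intro j hj
    obtain ⟨h1, h2⟩ := Finset.mem_Icc.1 hj
    show 2 * k - j ∈ Finset.Icc (k + 1) (2 * k - 1)
    exact Finset.mem_Icc.2 (by omega)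
  · intro m hm
    obtain ⟨h1, h2⟩ := Finset.mem_Icc.1 hm
    show 2 * k - (2 * k - m) = m
    omega
  · intro j hj
    obtain ⟨h1, h2⟩ := Finset.mem_Icc.1 hj
    show 2 * k - (2 * k - j) = j
    omega
  · intro m hm
    obtain ⟨h1, h2⟩ := Finset.mem_Icc.1 hm
    show Cminus m n * Cminus (2 * k - m) n = Cminus (2 * k - (2 * k - m)) n * Cminus (2 * k - m) n
    rw [show 2 * k - (2 * k - m) = m by omega]

end DyckAux

theorem dyck_count_a_mul_succ_sub_two (k n : ℕ) (hk : 1 ≤ k) (hn : 1 ≤ n) :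
    (dyckCount (2 * k) (2 * k * (n + 1) - 2) : ℚ) =
      Cminus (2 * k) n -
        ∑ j ∈ Finset.Icc 1 (k - 1), Cminus (2 * k - j) n * Cminus j n := by
  classical
  have hsplit := DyckAux.split_card k n hk hn
  have hbad := DyckAux.bad_card k n hk hn
  have hQ1 : (Nat.card {c : Fin (2 * k - 1) → ℕ // DyckAux.IsDyck (2 * k) (n + 1) c} : ℚ)
      = Cminus (2 * k) n := DyckAux.card_isDyck_eq_Cminus (2 * k) n (by omega)
  have hterm : ∀ m ∈ Finset.Icc (k + 1) (2 * k - 1),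
      ((Nat.card {c : Fin (2 * k - 1) → ℕ // DyckAux.Touch k n m c} : ℕ) : ℚ)
        = Cminus m n * Cminus (2 * k - m) n := by
    intro m hm
    obtain ⟨h1, h2⟩ := Finset.mem_Icc.1 hm
    rw [DyckAux.touch_card k n m hk hn h1 h2]
    push_cast
    rw [DyckAux.card_isDyck_eq_Cminus m n (by omega),
      DyckAux.card_isDyck_eq_Cminus (2 * k - m) n (by omega)]
  have hcast : (Nat.card {c : Fin (2 * k - 1) → ℕ // DyckAux.IsDyck (2 * k) (n + 1) c} : ℚ)
      = (Nat.card {c : Fin (2 * k - 1) → ℕ //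
          DyckAux.IsDyck (2 * k) (n + 1) c ∧ DyckAux.Bad k n c} : ℚ)
        + (dyckCount (2 * k) (2 * k * (n + 1) - 2) : ℚ) := by
    exact_mod_cast congrArg (fun x : ℕ => (x : ℚ)) hsplit
  have hbadQ : (Nat.card {c : Fin (2 * k - 1) → ℕ //
      DyckAux.IsDyck (2 * k) (n + 1) c ∧ DyckAux.Bad k n c} : ℚ)
      = ∑ j ∈ Finset.Icc 1 (k - 1), Cminus (2 * k - j) n * Cminus j n := by
    rw [hbad]
    push_cast
    rw [Finset.sum_congr rfl hterm]
    exact DyckAux.sum_reindex k n hk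
  rw [hQ1, hbadQ] at hcast
  linarith
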